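/- (Noncommutative Shapiro Lemma.) Let G be a subgroup of finite index of a group H. The map c : H¹(H, N_H) → H¹(G, N) induced on cohomology classes by sending a cocycle u ∈ Z¹(H, N_H) to the cocycle g ↦ u(g)(1_H) in Z¹(G,N) is a bijection. -/

import Mathlib

/-- A 1-cocycle of `G` in a (possibly noncommutative) group `N` on which `G`
acts on the left by group automorphisms: `u (g₁ * g₂) = u g₁ * g₁ • u g₂`. -/
def IsCocycle {G N : Type*} [Group G] [Group N] [MulDistribMulAction G N]
    (u : G → N) : Prop :=
  ∀ g₁ g₂ : G, u (g₁ * g₂) = u g₁ * g₁ • u g₂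

/-- Two maps `u v : G → N` are cohomologous if there is `n : N` with
`v g = n⁻¹ * u g * g • n` for all `g`. -/
def Cohomologous {G N : Type*} [Group G] [Group N] [MulDistribMulAction G N]
    (u v : G → N) : Prop :=
  ∃ n : N, ∀ g : G, v g = n⁻¹ * u g * g • n

/-- The induced `H`-group `N_H` of `G`-covariant maps `φ : H → N`
(those with `φ (g * h) = g • φ h`), as a subgroup of the group of all maps
`H → N` with pointwise multiplication. -/
def NHgroup {H : Type*} [Group H] (G : Subgroup H) (N : Type*) [Group N]
    [MulDistribMulAction G N] : Subgroup (H → N) where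
  carrier := {φ | ∀ (g : G) (h : H), φ ((g : H) * h) = g • φ h}
  mul_mem' := by
    intro a b ha hb g h
    simp only [Pi.mul_apply, ha g h, hb g h, smul_mul']
  one_mem' := by
    intro g h
    simp
  inv_mem' := by
    intro a ha g h
    simp only [Pi.inv_apply, ha g h, smul_inv']

/-- The left action of `H` on `N_H`, given by `(h • φ) h' = φ (h' * h)`; it is an
action by group automorphisms. -/
instance NHaction {H : Type*} [Group H] (G : Subgroup H) (N : Type*) [Group N]
    [MulDistribMulAction G N] : MulDistribMulAction H ↥(NHgroup G N) where
  smul h φ := ⟨fun h' => (φ : H → N) (h' * h), fun g h' => by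
    show (φ : H → N) ((g : H) * h' * h) = g • (φ : H → N) (h' * h)
    rw [mul_assoc]; exact φ.2 g (h' * h)⟩
  one_smul φ := by
    ext h'
    show (φ : H → N) (h' * 1) = (φ : H → N) h'
    rw [mul_one]
  mul_smul h₁ h₂ φ := by
    ext h'
    show (φ : H → N) (h' * (h₁ * h₂)) = (φ : H → N) (h' * h₁ * h₂)
    rw [mul_assoc]
  smul_mul h φ ψ := by
    ext h'
    rfl
  smul_one h := by
    ext h'
    rfl

/-- The setoid of 1-cocycles up to the cohomology relation. -/
def cocycleSetoid (G N : Type*) [Group G] [Group N] [MulDistribMulAction G N] :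
    Setoid {u : G → N // IsCocycle u} where
  r u v := Cohomologous u.1 v.1
  iseqv := by
    refine ⟨fun u => ⟨1, fun g => by simp⟩, ?_, ?_⟩
    · rintro u v ⟨n, hn⟩
      refine ⟨n⁻¹, fun g => ?_⟩
      rw [hn g, smul_inv']
      group
    · rintro u v w ⟨n, hn⟩ ⟨m, hm⟩
      refine ⟨n * m, fun g => ?_⟩
      rw [hm g, hn g, smul_mul', mul_inv_rev]
      group

/-- The first noncommutative cohomology set `H¹(G,N)`. -/
def H1 (G N : Type*) [Group G] [Group N] [MulDistribMulAction G N] :=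
  Quotient (cocycleSetoid G N)

section Helpers

variable {H : Type*} [Group H] {G : Subgroup H} {N : Type*} [Group N]
  [MulDistribMulAction G N]

lemma NH_smul_apply (h : H) (φ : ↥(NHgroup G N)) (x : H) :
    ((h • φ : ↥(NHgroup G N)) : H → N) x = (φ : H → N) (x * h) := rfl

lemma NH_mul_apply (φ ψ : ↥(NHgroup G N)) (x : H) :
    ((φ * ψ : ↥(NHgroup G N)) : H → N) x = (φ : H → N) x * (ψ : H → N) x := rfl

lemma NH_inv_apply (φ : ↥(NHgroup G N)) (x : H) :
    ((φ⁻¹ : ↥(NHgroup G N)) : H → N) x = ((φ : H → N) x)⁻¹ := rfl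

/-- For a cocycle `u : H → N_H`, evaluating at `1` gives
`α (g * x) = α g * g • α x` for `g ∈ G`. -/
lemma alpha_mul {u : H → ↥(NHgroup G N)} (hu : IsCocycle u) (g : G) (x : H) :
    ((u ((g : H) * x)) : H → N) 1
      = ((u (g : H)) : H → N) 1 * g • (((u x) : H → N) 1) := by
  have h1 := congrArg (fun φ : ↥(NHgroup G N) => (φ : H → N) 1) (hu (g : H) x)
  simp only [NH_mul_apply, NH_smul_apply, one_mul] at h1
  rw [h1]
  congr 1
  have h2 := (u x).2 g 1
  rwa [mul_one] at h2

/-- A cocycle `u : H → N_H` is determined by `α x := u x 1`: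
`u h x = (α x)⁻¹ * α (x * h)`. -/
lemma cocycle_eval {u : H → ↥(NHgroup G N)} (hu : IsCocycle u) (h x : H) :
    ((u h) : H → N) x = (((u x) : H → N) 1)⁻¹ * ((u (x * h)) : H → N) 1 := by
  have h1 := congrArg (fun φ : ↥(NHgroup G N) => (φ : H → N) 1) (hu x h)
  simp only [NH_mul_apply, NH_smul_apply, one_mul] at h1
  rw [h1]
  group

end Helpers

theorem noncommutative_shapiro_lemma {H : Type*} [Group H] (G : Subgroup H)
    [hfin : Subgroup.FiniteIndex G]
    {N : Type*} [Group N] [MulDistribMulAction G N]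
    (hind : ∀ u : H → ↥(NHgroup G N), IsCocycle u →
      IsCocycle (fun g : G => ((u (g : H) : H → N)) 1))
    (c : H1 H ↥(NHgroup G N) → H1 G N)
    (hc : ∀ u : {u : H → ↥(NHgroup G N) // IsCocycle u},
      c (Quotient.mk (cocycleSetoid H ↥(NHgroup G N)) u) =
        Quotient.mk (cocycleSetoid G N)
          ⟨fun g : G => ((u.1 (g : H) : H → N)) 1, hind u.1 u.2⟩) :
    Function.Bijective c := by
  constructor
  · -- Injectivity
    intro a b
    induction a using Quotient.ind with
    | _ u =>
      induction b using Quotient.ind with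
      | _ u' =>
        intro hab
        rw [hc u, hc u'] at hab
        obtain ⟨n₀, hn₀⟩ := Quotient.exact hab
        apply Quotient.sound
        -- the comparison maps α, α'
        set α : H → N := fun x => ((u.1 x) : H → N) 1 with hα
        set α' : H → N := fun x => ((u'.1 x) : H → N) 1 with hα'
        -- the covariant map n
        have hcov : ∀ (g : G) (x : H),
            (α ((g : H) * x))⁻¹ * n₀ * α' ((g : H) * x)
              = g • ((α x)⁻¹ * n₀ * α' x) := by
          intro g x
          have h1 : α ((g : H) * x) = α (g : H) * g • α x := alpha_mul u.2 g x
          have h2 : α' ((g : H) * x) = α' (g : H) * g • α' x := alpha_mul u'.2 g x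
          have h3 : α' (g : H) = n₀⁻¹ * α (g : H) * g • n₀ := hn₀ g
          rw [h1, h2, h3, smul_mul', smul_mul', smul_inv']
          group
        refine ⟨⟨fun x => (α x)⁻¹ * n₀ * α' x, fun g x => hcov g x⟩, ?_⟩
        intro h
        apply Subtype.ext
        funext x
        rw [NH_mul_apply, NH_mul_apply, NH_inv_apply, NH_smul_apply]
        show ((u'.1 h) : H → N) x = _
        rw [cocycle_eval u.2 h x, cocycle_eval u'.2 h x]
        show _ = ((α x)⁻¹ * n₀ * α' x)⁻¹ * ((α x)⁻¹ * α (x * h))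
            * ((α (x * h))⁻¹ * n₀ * α' (x * h))
        group
        rfl
  · -- Surjectivity
    intro b
    induction b using Quotient.ind with
    | _ v =>
      -- choose representatives of right cosets G\H
      set r : H → H := fun x => ((QuotientGroup.mk (s := G) x⁻¹ : H ⧸ G).out)⁻¹
        with hrdef
      have hrG : ∀ x : H, x * (r x)⁻¹ ∈ G := by
        intro x
        have h1 : QuotientGroup.mk (s := G)
            ((QuotientGroup.mk (s := G) x⁻¹ : H ⧸ G).out)
              = QuotientGroup.mk (s := G) x⁻¹ := Quotient.out_eq _
        have h2 := (QuotientGroup.eq (s := G)).mp h1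
        have h3 := G.inv_mem h2
        simpa [hrdef, mul_assoc] using h3
      have hr : ∀ (g : G) (x : H), r ((g : H) * x) = r x := by
        intro g x
        have h1 : QuotientGroup.mk (s := G) ((g : H) * x)⁻¹
            = QuotientGroup.mk (s := G) x⁻¹ := by
          rw [QuotientGroup.eq]
          simp [mul_assoc, G.inv_mem g.2]
        simp [hrdef, h1]
      set γ : H → G := fun x => ⟨x * (r x)⁻¹, hrG x⟩ with hγdef
      have hγ : ∀ (g : G) (x : H), γ ((g : H) * x) = g * γ x := by
        intro g x
        apply Subtype.ext
        show (g : H) * x * (r ((g : H) * x))⁻¹ = (g : H) * (x * (r x)⁻¹)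
        rw [hr g x, mul_assoc]
      set α : H → N := fun x => v.1 (γ x) with hαdef
      have hα : ∀ (g : G) (x : H), α ((g : H) * x) = v.1 g * g • α x := by
        intro g x
        show v.1 (γ ((g : H) * x)) = v.1 g * g • v.1 (γ x)
        rw [hγ g x, v.2 g (γ x)]
      -- the induced cocycle
      set u : H → ↥(NHgroup G N) := fun h =>
        ⟨fun x => (α x)⁻¹ * α (x * h), by
          intro g x
          show (α ((g : H) * x))⁻¹ * α ((g : H) * x * h)
            = g • ((α x)⁻¹ * α (x * h))
          rw [mul_assoc, hα g x, hα g (x * h), mul_inv_rev, smul_mul', smul_inv']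
          group⟩ with hudef
      have hu : IsCocycle u := by
        intro h₁ h₂
        apply Subtype.ext
        funext x
        rw [NH_mul_apply, NH_smul_apply]
        show (α x)⁻¹ * α (x * (h₁ * h₂))
            = ((α x)⁻¹ * α (x * h₁)) * ((α (x * h₁))⁻¹ * α (x * h₁ * h₂))
        rw [← mul_assoc x h₁ h₂]
        group
      refine ⟨Quotient.mk _ ⟨u, hu⟩, ?_⟩
      rw [hc]
      apply Quotient.sound
      refine ⟨(v.1 (γ 1))⁻¹, fun g => ?_⟩
      show v.1 g = _ * ((α 1)⁻¹ * α (1 * (g : H))) * g • (v.1 (γ 1))⁻¹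
      have h1 : α (1 * (g : H)) = v.1 g * g • α 1 := by
        rw [one_mul]
        have := hα g 1
        rwa [mul_one] at this
      have h2 : α 1 = v.1 (γ 1) := rfl
      rw [h1, h2, smul_inv']
      group
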